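/- If a space X satisfies the set-valued insertion property for pairs of semicontinuous [−1,1]-interval-valued mappings — namely, whenever Φ(x)=[−1,η(x)] is l.s.c. and θ(x)=[−1,ξ(x)] is u.s.c. with θ(x) ⊆ Φ(x) and Φ(x)∖θ(x) ≠ ∅ for all x, there exists a continuous compact-connected-valued φ with θ(x) ⊆ φ(x) ⊆ Φ(x) and φ(x)∖θ(x) ≠ ∅ — then for every u.s.c. ξ: X → ℝ and l.s.c. η: X → ℝ with ξ < η pointwise there is a continuous f: X → ℝ with ξ < f < η. -/

import Mathlib

open TopologicalSpace

section Aux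

open Set Metric

/-- the map `t ↦ t / (1 + |t|)` -/
noncomputable def dowkerH (t : ℝ) : ℝ := t / (1 + |t|)

lemma dowkerH_strictMono : StrictMono dowkerH := by
  intro s t hst
  have hs : (0:ℝ) < 1 + |s| := by positivity
  have ht : (0:ℝ) < 1 + |t| := by positivity
  rw [dowkerH, dowkerH, div_lt_div_iff₀ hs ht]
  rcases abs_cases s with ⟨hs1, _⟩ | ⟨hs1, _⟩ <;>
    rcases abs_cases t with ⟨ht1, _⟩ | ⟨ht1, _⟩ <;> nlinarith

lemma dowkerH_mem (t : ℝ) : dowkerH t ∈ Set.Ioo (-1:ℝ) 1 := by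
  have ht : (0:ℝ) < 1 + |t| := by positivity
  have : |dowkerH t| < 1 := by
    rw [dowkerH, abs_div, abs_of_pos ht, div_lt_one ht]
    linarith
  exact ⟨by linarith [abs_lt.1 this |>.1], (abs_lt.1 this).2⟩

lemma dowkerH_continuous : Continuous dowkerH := by
  apply Continuous.div continuous_id (by continuity)
  intro x; positivity

lemma dowkerH_inv (t : ℝ) (ht : |t| < 1) : dowkerH (t / (1 - |t|)) = t := by
  have hd : 0 < 1 - |t| := by linarith
  rw [dowkerH, abs_div, abs_of_pos hd]
  field_simp
  ring

/-- `sSup` is 1-Lipschitz on nonempty compacts of `ℝ`. -/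
lemma sSup_le_sSup_add_dist (A B : NonemptyCompacts ℝ) :
    sSup (A : Set ℝ) ≤ sSup (B : Set ℝ) + dist A B := by
  refine le_of_forall_pos_le_add fun ε hε => ?_
  have hmem : sSup (A : Set ℝ) ∈ (A : Set ℝ) :=
    A.isCompact.sSup_mem A.nonempty
  have hfin : EMetric.hausdorffEdist (A : Set ℝ) (B : Set ℝ) ≠ ⊤ := by
    apply Metric.hausdorffEdist_ne_top_of_nonempty_of_bounded A.nonempty B.nonempty
      A.isCompact.isBounded B.isCompact.isBounded
  have hlt : Metric.hausdorffDist (A : Set ℝ) (B : Set ℝ) < dist A B + ε := by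
    rw [NonemptyCompacts.dist_eq]; linarith
  obtain ⟨y, hyB, hy⟩ := Metric.exists_dist_lt_of_hausdorffDist_lt hmem hlt hfin
  have h1 : sSup (A : Set ℝ) ≤ y + (dist A B + ε) := by
    have := abs_lt.1 (by rwa [Real.dist_eq] at hy) |>.2
    linarith
  have h2 : y ≤ sSup (B : Set ℝ) := le_csSup B.isCompact.bddAbove hyB
  linarith

lemma sSup_lipschitz : LipschitzWith 1 (fun A : NonemptyCompacts ℝ => sSup (A : Set ℝ)) := by
  apply LipschitzWith.of_dist_le_mul
  intro A B
  rw [NNReal.coe_one, one_mul, Real.dist_eq, abs_sub_le_iff]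
  constructor
  · linarith [sSup_le_sSup_add_dist A B]
  · rw [dist_comm]; linarith [sSup_le_sSup_add_dist B A]

end Aux

/-- If a space `X` satisfies the set-valued insertion property for pairs of
semicontinuous `[-1,1]`-interval-valued mappings — whenever `Φ(x) = [-1,η(x)]`
is l.s.c. and `θ(x) = [-1,ξ(x)]` is u.s.c. with `θ ⊆ Φ` and `Φ(x) ∖ θ(x) ≠ ∅`,
there is a continuous compact-connected-valued `φ` with
`θ(x) ⊆ φ(x) ⊆ Φ(x)` and `φ(x) ∖ θ(x) ≠ ∅` — then for every u.s.c. `ξ : X → ℝ`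
and l.s.c. `η : X → ℝ` with `ξ < η` pointwise there is a continuous `f : X → ℝ`
with `ξ < f < η` pointwise. -/
theorem insertion_property_implies_dowker_conclusion {X : Type*} [TopologicalSpace X]
    (H : ∀ ξ η : X → ℝ,
      (∀ x, ξ x ∈ Set.Ioo (-1:ℝ) 1) → (∀ x, η x ∈ Set.Ioo (-1:ℝ) 1) →
      (∀ r : ℝ, IsOpen {x | ξ x < r}) → (∀ r : ℝ, IsOpen {x | r < η x}) →
      (∀ x, ξ x < η x) →
      ∃ φ : X → NonemptyCompacts ℝ, Continuous φ ∧ ∀ x,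
        IsConnected (φ x : Set ℝ) ∧
        Set.Icc (-1:ℝ) (ξ x) ⊆ (φ x : Set ℝ) ∧
        (φ x : Set ℝ) ⊆ Set.Icc (-1:ℝ) (η x) ∧
        ((φ x : Set ℝ) \ Set.Icc (-1:ℝ) (ξ x)).Nonempty) :
    ∀ ξ η : X → ℝ, (∀ r : ℝ, IsOpen {x | ξ x < r}) → (∀ r : ℝ, IsOpen {x | r < η x}) →
      (∀ x, ξ x < η x) →
      ∃ f : X → ℝ, Continuous f ∧ ∀ x, ξ x < f x ∧ f x < η x := by
  intro ξ η hξ hη hlt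
  -- transport to (-1,1) via dowkerH
  set ξ' : X → ℝ := fun x => dowkerH (ξ x) with hξ'def
  set η' : X → ℝ := fun x => dowkerH (η x) with hη'def
  have hξusc : UpperSemicontinuous ξ :=
    upperSemicontinuous_iff_isOpen_preimage.2 fun r => hξ r
  have hηlsc : LowerSemicontinuous η :=
    lowerSemicontinuous_iff_isOpen_preimage.2 fun r => hη r
  have hξ'usc : UpperSemicontinuous ξ' :=
    dowkerH_continuous.comp_upperSemicontinuous hξusc dowkerH_strictMono.monotone
  have hη'lsc : LowerSemicontinuous η' :=
    dowkerH_continuous.comp_lowerSemicontinuous hηlsc dowkerH_strictMono.monotone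
  have hξ'mem : ∀ x, ξ' x ∈ Set.Ioo (-1:ℝ) 1 := fun x => dowkerH_mem _
  have hη'mem : ∀ x, η' x ∈ Set.Ioo (-1:ℝ) 1 := fun x => dowkerH_mem _
  have hlt' : ∀ x, ξ' x < η' x := fun x => dowkerH_strictMono (hlt x)
  have hξ'open : ∀ r : ℝ, IsOpen {x | ξ' x < r} :=
    fun r => upperSemicontinuous_iff_isOpen_preimage.1 hξ'usc r
  have hη'open : ∀ r : ℝ, IsOpen {x | r < η' x} :=
    fun r => lowerSemicontinuous_iff_isOpen_preimage.1 hη'lsc r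
  -- first application of H
  obtain ⟨φ₁, hφ₁c, hφ₁⟩ := H ξ' η' hξ'mem hη'mem hξ'open hη'open hlt'
  -- second application, to the reflected pair
  have hmem₂a : ∀ x, -η' x ∈ Set.Ioo (-1:ℝ) 1 := fun x => by
    have := hη'mem x; constructor <;> [linarith [this.2]; linarith [this.1]]
  have hmem₂b : ∀ x, -ξ' x ∈ Set.Ioo (-1:ℝ) 1 := fun x => by
    have := hξ'mem x; constructor <;> [linarith [this.2]; linarith [this.1]]
  have hopen₂a : ∀ r : ℝ, IsOpen {x | -η' x < r} := by
    intro r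
    have : {x | -η' x < r} = {x | -r < η' x} := by ext x; simp; constructor <;> intro <;> linarith
    rw [this]; exact hη'open (-r)
  have hopen₂b : ∀ r : ℝ, IsOpen {x | r < -ξ' x} := by
    intro r
    have : {x | r < -ξ' x} = {x | ξ' x < -r} := by ext x; simp; constructor <;> intro <;> linarith
    rw [this]; exact hξ'open (-r)
  obtain ⟨φ₂, hφ₂c, hφ₂⟩ := H (fun x => -η' x) (fun x => -ξ' x) hmem₂a hmem₂b hopen₂a hopen₂b
    (fun x => by show -η' x < -ξ' x; linarith [hlt' x])
  -- the two inserted functions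
  set g₁ : X → ℝ := fun x => sSup (φ₁ x : Set ℝ) with hg₁def
  set g₂ : X → ℝ := fun x => sSup (φ₂ x : Set ℝ) with hg₂def
  have hg₁c : Continuous g₁ := sSup_lipschitz.continuous.comp hφ₁c
  have hg₂c : Continuous g₂ := sSup_lipschitz.continuous.comp hφ₂c
  -- bounds for g₁ : ξ' x < g₁ x ≤ η' x
  have hg₁lb : ∀ x, ξ' x < g₁ x := by
    intro x
    obtain ⟨y, hyφ, hyn⟩ := (hφ₁ x).2.2.2
    have hy2 := (hφ₁ x).2.2.1 hyφ
    have hygt : ξ' x < y := by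
      by_contra hc
      exact hyn ⟨hy2.1, not_lt.1 hc⟩
    exact lt_of_lt_of_le hygt (le_csSup (φ₁ x).isCompact.bddAbove hyφ)
  have hg₁ub : ∀ x, g₁ x ≤ η' x := by
    intro x
    exact csSup_le (φ₁ x).nonempty fun y hy => ((hφ₁ x).2.2.1 hy).2
  -- bounds for g₂ : -η' x < g₂ x ≤ -ξ' x
  have hg₂lb : ∀ x, -η' x < g₂ x := by
    intro x
    obtain ⟨y, hyφ, hyn⟩ := (hφ₂ x).2.2.2
    have hy2 := (hφ₂ x).2.2.1 hyφ
    have hygt : -η' x < y := by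
      by_contra hc
      exact hyn ⟨hy2.1, not_lt.1 hc⟩
    exact lt_of_lt_of_le hygt (le_csSup (φ₂ x).isCompact.bddAbove hyφ)
  have hg₂ub : ∀ x, g₂ x ≤ -ξ' x := by
    intro x
    exact csSup_le (φ₂ x).nonempty fun y hy => ((hφ₂ x).2.2.1 hy).2
  -- average
  set f' : X → ℝ := fun x => (g₁ x - g₂ x) / 2 with hf'def
  have hf'c : Continuous f' := by fun_prop
  have hf'lb : ∀ x, ξ' x < f' x := fun x => by
    have := hg₁lb x; have := hg₂ub x; show ξ' x < (g₁ x - g₂ x) / 2; linarith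
  have hf'ub : ∀ x, f' x < η' x := fun x => by
    have := hg₁ub x; have := hg₂lb x; show (g₁ x - g₂ x) / 2 < η' x; linarith
  have hf'mem : ∀ x, |f' x| < 1 := fun x => by
    have h1 := (hξ'mem x).1; have h2 := (hη'mem x).2
    rw [abs_lt]
    exact ⟨by linarith [hf'lb x], by linarith [hf'ub x]⟩
  -- transport back
  refine ⟨fun x => f' x / (1 - |f' x|), ?_, ?_⟩
  · apply Continuous.div hf'c (by fun_prop)
    intro x
    have := hf'mem x; intro hc
    rw [sub_eq_zero] at hc
    exact absurd hc.symm (ne_of_lt this)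
  · intro x
    have key : dowkerH (f' x / (1 - |f' x|)) = f' x := dowkerH_inv _ (hf'mem x)
    constructor
    · have : dowkerH (ξ x) < dowkerH (f' x / (1 - |f' x|)) := by
        rw [key]; exact hf'lb x
      exact dowkerH_strictMono.lt_iff_lt.1 this
    · have : dowkerH (f' x / (1 - |f' x|)) < dowkerH (η x) := by
        rw [key]; exact hf'ub x
      exact dowkerH_strictMono.lt_iff_lt.1 this
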